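/- A problem f :⊆ ℕ^ℕ ⇉ ℕ^ℕ is computably discontinuous if and only if Player I has a computable winning strategy in the Wadge game of f (i.e., a winning strategy σ : List (List ℕ) → List ℕ that is a computable function in the standard sense via encodings). -/

import Mathlib

noncomputable section

/-- Baire space `ℕ^ℕ`. -/
abbrev Baire : Type := ℕ → ℕ

/-- The Cantor pairing `⟨n,k⟩ = (n+k)(n+k+1)/2 + k`. -/
def cpair (n k : ℕ) : ℕ := (n + k) * (n + k + 1) / 2 + k

/-- The inverse of the Cantor pairing. -/
noncomputable def cunpair (m : ℕ) : ℕ × ℕ :=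
  Classical.epsilon fun x : ℕ × ℕ => cpair x.1 x.2 = m

/-- A fixed bijective numbering `w : ℕ → List ℕ` of finite words. -/
def word (n : ℕ) : List ℕ := Denumerable.ofNat (List ℕ) n

/-- `l` is a finite prefix of the infinite sequence `p`. -/
def IsPrefixOf (l : List ℕ) (p : Baire) : Prop := l = (List.range l.length).map p

/-- Two words are comparable in the prefix order. -/
def WordComparable (u v : List ℕ) : Prop := u <+: v ∨ v <+: u

/-- The word `w(n_i)` decoded from the `i`-th entry of the code `q`. -/
noncomputable def wn (q : Baire) (i : ℕ) : List ℕ := word (cunpair (q i)).1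

/-- The word `w(k_i)` decoded from the `i`-th entry of the code `q`. -/
noncomputable def wk (q : Baire) (i : ℕ) : List ℕ := word (cunpair (q i)).2

/-- The code `q` is consistent. -/
def ConsistentCode (q : Baire) : Prop :=
  ∀ i j, WordComparable (wn q i) (wn q j) → WordComparable (wk q i) (wk q j)

/-- The continuous partial function `Φ_q :⊆ ℕ^ℕ → ℕ^ℕ` coded by `q`. -/
noncomputable def Phi (q : Baire) : Baire →. Baire := fun p =>
  ⟨ConsistentCode q ∧ ∀ m : ℕ, ∃ i, IsPrefixOf (wn q i) p ∧ m < (wk q i).length,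
   fun _ => Classical.epsilon fun x : Baire =>
      ∀ i, IsPrefixOf (wn q i) p → IsPrefixOf (wk q i) x⟩

/-- The pairing `⟨q,p⟩` on Baire space. -/
def bpair (q p : Baire) : Baire := fun n => if n % 2 = 0 then q (n / 2) else p (n / 2)

/-- Even part of a sequence. -/
def evens (r : Baire) : Baire := fun n => r (2 * n)

/-- Odd part of a sequence. -/
def odds (r : Baire) : Baire := fun n => r (2 * n + 1)

/-- The universal function `U(⟨q,p⟩) = Φ_q(p)`. -/
noncomputable def U : Baire →. Baire := fun r => Phi (evens r) (odds r)

/-- `h` is monotone for the prefix order. -/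
def MonotoneWord (h : List ℕ → List ℕ) : Prop := ∀ u v, u <+: v → h u <+: h v

/-- `h` approximates the partial function `F`. -/
def Approximates (h : List ℕ → List ℕ) (F : Baire →. Baire) : Prop :=
  ∀ p, ∀ hp : (F p).Dom,
    (∀ v, IsPrefixOf v p → IsPrefixOf (h v) ((F p).get hp)) ∧
    (∀ m : ℕ, ∃ v, IsPrefixOf v p ∧ m < (h v).length)

/-- `F :⊆ ℕ^ℕ → ℕ^ℕ` is continuous: some monotone word function approximates it. -/
def ContinuousPF (F : Baire →. Baire) : Prop := ∃ h, MonotoneWord h ∧ Approximates h F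

/-- `F :⊆ ℕ^ℕ → ℕ^ℕ` is computable: some computable monotone word function approximates it. -/
def ComputablePF (F : Baire →. Baire) : Prop :=
  ∃ h, Computable h ∧ MonotoneWord h ∧ Approximates h F

/-- A total function is computable iff it is computable as a partial function with full domain. -/
def ComputableTotal (F : Baire → Baire) : Prop := ComputablePF fun p => Part.some (F p)

/-- A problem (multivalued function on Baire space). -/
abbrev Problem : Type := Baire → Set Baire

/-- `F` is a realizer of the problem `f`. -/
def Realizes (F : Baire →. Baire) (f : Problem) : Prop :=
  ∀ p, (f p).Nonempty → ∃ h : (F p).Dom, (F p).get h ∈ f p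

/-- `f` is continuous: it has a continuous realizer. -/
def ContinuousProblem (f : Problem) : Prop := ∃ F, ContinuousPF F ∧ Realizes F f

/-- The discontinuity problem `DIS`. -/
noncomputable def DIS : Problem := fun p => {q | q ∉ U p}

/-- `D` is a discontinuity function for `f`. -/
def DiscontinuityFunction (D : Baire → Baire) (f : Problem) : Prop :=
  ∀ q, (f (D q)).Nonempty ∧ ∀ y ∈ Phi q (D q), y ∉ f (D q)

/-- `f` is computably discontinuous. -/
def ComputablyDiscontinuous (f : Problem) : Prop :=
  ∃ D, ComputableTotal D ∧ DiscontinuityFunction D f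

/-- `f` is effectively discontinuous. -/
def EffectivelyDiscontinuous (f : Problem) : Prop :=
  ∃ D : Baire → Baire, Continuous D ∧ DiscontinuityFunction D f

/-- Weihrauch reducibility `f ≤_W g`. -/
def WeihrauchRed (f g : Problem) : Prop :=
  ∃ H K : Baire →. Baire, ComputablePF H ∧ ComputablePF K ∧
    ∀ G : Baire →. Baire, Realizes G g →
      Realizes (fun p => (K p).bind fun s => (G s).bind fun t => H (bpair p t)) f

/-- Strong Weihrauch reducibility `f ≤_sW g`. -/
def StrongWeihrauchRed (f g : Problem) : Prop :=
  ∃ H K : Baire →. Baire, ComputablePF H ∧ ComputablePF K ∧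
    ∀ G : Baire →. Baire, Realizes G g →
      Realizes (fun p => (K p).bind fun s => (G s).bind fun t => H t) f

/-- Continuous Weihrauch reducibility `f ≤*_W g`. -/
def ContWeihrauchRed (f g : Problem) : Prop :=
  ∃ H K : Baire →. Baire, ContinuousPF H ∧ ContinuousPF K ∧
    ∀ G : Baire →. Baire, Realizes G g →
      Realizes (fun p => (K p).bind fun s => (G s).bind fun t => H (bpair p t)) f

/-- Continuous strong Weihrauch reducibility `f ≤*_sW g`. -/
def ContStrongWeihrauchRed (f g : Problem) : Prop :=
  ∃ H K : Baire →. Baire, ContinuousPF H ∧ ContinuousPF K ∧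
    ∀ G : Baire →. Baire, Realizes G g →
      Realizes (fun p => (K p).bind fun s => (G s).bind fun t => H t) f

/-- Concatenation of the first `n` moves. -/
def concatN (ms : ℕ → List ℕ) (n : ℕ) : List ℕ := ((List.range n).map ms).flatten

/-- The concatenated play is infinite. -/
def PlayInf (ms : ℕ → List ℕ) : Prop := ∀ m : ℕ, ∃ n, m < (concatN ms n).length

/-- The infinite sequence determined by an infinite play. -/
noncomputable def playLim (ms : ℕ → List ℕ) : Baire :=
  Classical.epsilon fun p : Baire => ∀ n, IsPrefixOf (concatN ms n) p

/-- Player II wins the run of the Wadge game of `f` given by the moves `xs` of I and `ys` of II. -/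
def WadgeIIWins (f : Problem) (xs ys : ℕ → List ℕ) : Prop :=
  (PlayInf xs ∧ (f (playLim xs)).Nonempty) → (PlayInf ys ∧ playLim ys ∈ f (playLim xs))

/-- The list of first `n` moves. -/
def histW (xs : ℕ → List ℕ) (n : ℕ) : List (List ℕ) := (List.range n).map xs

/-- `σ` is a winning strategy for Player II in the Wadge game of `f`. -/
def WadgeWinningII (f : Problem) (σ : List (List ℕ) → List ℕ) : Prop :=
  ∀ xs : ℕ → List ℕ, WadgeIIWins f xs fun i => σ (histW xs (i + 1))

/-- `σ` is a winning strategy for Player I in the Wadge game of `f`. -/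
def WadgeWinningI (f : Problem) (σ : List (List ℕ) → List ℕ) : Prop :=
  ∀ ys : ℕ → List ℕ, ¬ WadgeIIWins f (fun i => σ (histW ys i)) ys

/-- The list of first `n` values of a sequence. -/
def histN (x : Baire) (n : ℕ) : List ℕ := (List.range n).map x

/-- Player II wins the run `(x,y)` of the Lipschitz game of `f`. -/
def LipIIWins (f : Problem) (x y : Baire) : Prop := (f x).Nonempty → y ∈ f x

/-- `σ` is a winning strategy for Player II in the Lipschitz game of `f`. -/
def LipWinningII (f : Problem) (σ : List ℕ → ℕ) : Prop :=
  ∀ x : Baire, LipIIWins f x fun i => σ (histN x (i + 1))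

/-- `σ` is a winning strategy for Player I in the Lipschitz game of `f`. -/
def LipWinningI (f : Problem) (σ : List ℕ → ℕ) : Prop :=
  ∀ y : Baire, ¬ LipIIWins f (fun i => σ (histN y i)) y

/-- `σ` is a winning strategy for Player II in the Gale–Stewart game `A`. -/
def GSWinningII (A : Set Baire) (σ : List ℕ → ℕ) : Prop :=
  ∀ x : Baire, bpair x (fun i => σ (histN x (i + 1))) ∈ A

/-- `σ` is a winning strategy for Player I in the Gale–Stewart game `A`. -/
def GSWinningI (A : Set Baire) (σ : List ℕ → ℕ) : Prop :=
  ∀ y : Baire, bpair (fun i => σ (histN y i)) y ∉ A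

/-- The totalization `Tf` of `f`. -/
def Totalization (f : Problem) : Problem := fun p => {q | (f p).Nonempty → q ∈ f p}

/-- The paired graph `⟨graph(Tf)⟩ ⊆ ℕ^ℕ`. -/
def pairedGraph (f : Problem) : Set Baire :=
  {r | ∃ x y : Baire, r = bpair x y ∧ y ∈ Totalization f x}

/-- Domain of the word concatenation map `w*`. -/
def wstarDom (p : Baire) : Prop := PlayInf fun i => word (p i)

/-- The word concatenation map `w* : p ↦ w(p 0) w(p 1) ⋯` (on its domain). -/
noncomputable def wstar (p : Baire) : Baire := playLim fun i => word (p i)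

/-- The problem `f^w = w*⁻¹ ∘ f ∘ w*`. -/
noncomputable def wordLift (f : Problem) : Problem := fun p =>
  {q | wstarDom p ∧ (f (wstar p)).Nonempty ∧ wstarDom q ∧ wstar q ∈ f (wstar p)}

/-- The `i`-th component of a tupled sequence. -/
def tupleComp (p : Baire) (i : ℕ) : Baire := fun n => p (cpair i n)

/-- The parallelization `⟨f⟩` of `f`. -/
def Parallelization (f : Problem) : Problem := fun p =>
  {q | ∀ i, tupleComp q i ∈ f (tupleComp p i)}

/-- Turing reducibility: `p` is computable relative to the oracle `q`. -/
def TuringLe (p q : Baire) : Prop := ∃ F : Baire →. Baire, ComputablePF F ∧ p ∈ F q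

end

section WadgeAux

open List

/-! ### Basic prefix lemmas -/

theorem isPrefixOf_of_forall {l : List ℕ} {p : Baire}
    (h : ∀ k (hk : k < l.length), l[k] = p k) : IsPrefixOf l p := by
  apply List.ext_getElem (by simp)
  intro k h1 h2
  simpa using h k h1

theorem IsPrefixOf.getElem {l : List ℕ} {p : Baire} (h : IsPrefixOf l p)
    {k : ℕ} (hk : k < l.length) : l[k] = p k := by
  have := List.getElem_of_eq h hk
  simpa using this

theorem isPrefixOf_histN (p : Baire) (n : ℕ) : IsPrefixOf ((List.range n).map p) p := by
  apply isPrefixOf_of_forall; intro k hk; simp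

theorem isPrefixOf_nil (p : Baire) : IsPrefixOf [] p := rfl

theorem IsPrefixOf.mono {u l : List ℕ} {p : Baire} (hu : u <+: l) (hl : IsPrefixOf l p) :
    IsPrefixOf u p := by
  apply isPrefixOf_of_forall
  intro k hk
  rw [hu.getElem hk]
  exact hl.getElem _

theorem IsPrefixOf.prefix_of_le {u v : List ℕ} {p : Baire} (hu : IsPrefixOf u p)
    (hv : IsPrefixOf v p) (h : u.length ≤ v.length) : u <+: v := by
  rw [List.prefix_iff_eq_take]
  apply List.ext_getElem (by simp [Nat.min_eq_left h])
  intro k h1 h2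
  rw [hu.getElem h1, List.getElem_take]
  exact (hv.getElem _).symm

/-! ### concatN lemmas -/

theorem concatN_zero (ms : ℕ → List ℕ) : concatN ms 0 = [] := rfl

theorem concatN_succ (ms : ℕ → List ℕ) (n : ℕ) :
    concatN ms (n + 1) = concatN ms n ++ ms n := by
  simp [concatN, List.range_succ]

theorem concatN_prefix (ms : ℕ → List ℕ) {m n : ℕ} (h : m ≤ n) :
    concatN ms m <+: concatN ms n := by
  induction n with
  | zero => simp_all
  | succ n ih =>
    rcases Nat.lt_or_ge m (n+1) with h' | h'
    · exact (ih (Nat.lt_succ_iff.mp h')).trans (by rw [concatN_succ]; exact List.prefix_append _ _)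
    · have : m = n + 1 := le_antisymm h h'
      subst this; rfl

/-! ### playLim lemmas -/

theorem exists_playLim (ms : ℕ → List ℕ) : ∃ p : Baire, ∀ n, IsPrefixOf (concatN ms n) p := by
  classical
  refine ⟨fun k => if h : ∃ n, k < (concatN ms n).length then
      (concatN ms h.choose)[k]'h.choose_spec else 0, fun n => ?_⟩
  apply isPrefixOf_of_forall
  intro k hk
  have hex : ∃ n, k < (concatN ms n).length := ⟨n, hk⟩
  rw [dif_pos hex]
  rcases Nat.le_total hex.choose n with h' | h'
  · exact ((concatN_prefix ms h').getElem hex.choose_spec).symm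
  · exact (concatN_prefix ms h').getElem hk

theorem playLim_isPrefix (ms : ℕ → List ℕ) (n : ℕ) :
    IsPrefixOf (concatN ms n) (playLim ms) :=
  Classical.epsilon_spec (exists_playLim ms) n

theorem eq_on_common {l : List ℕ} {p p' : Baire} (hp : IsPrefixOf l p) (hp' : IsPrefixOf l p')
    {k : ℕ} (hk : k < l.length) : p k = p' k := by
  rw [← hp.getElem hk, hp'.getElem hk]

theorem playLim_unique {ms : ℕ → List ℕ} (hinf : PlayInf ms) {p : Baire}
    (hp : ∀ n, IsPrefixOf (concatN ms n) p) : p = playLim ms := by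
  funext k
  obtain ⟨n, hn⟩ := hinf k
  exact eq_on_common (hp n) (playLim_isPrefix ms n) hn

/-! ### Phi lemmas -/

theorem phi_sat_unique {q p : Baire} (hd : (Phi q p).Dom) {x1 x2 : Baire}
    (h1 : ∀ i, IsPrefixOf (wn q i) p → IsPrefixOf (wk q i) x1)
    (h2 : ∀ i, IsPrefixOf (wn q i) p → IsPrefixOf (wk q i) x2) : x1 = x2 := by
  funext k
  obtain ⟨i, hi, hik⟩ := hd.2 k
  exact eq_on_common (h1 i hi) (h2 i hi) hik

theorem phi_get_eq {q p : Baire} (hd : (Phi q p).Dom) {z : Baire}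
    (hz : ∀ i, IsPrefixOf (wn q i) p → IsPrefixOf (wk q i) z) : (Phi q p).get hd = z := by
  have hsat : ∀ i, IsPrefixOf (wn q i) p → IsPrefixOf (wk q i)
      (Classical.epsilon fun x : Baire => ∀ i, IsPrefixOf (wn q i) p → IsPrefixOf (wk q i) x) :=
    Classical.epsilon_spec
      (p := fun x : Baire => ∀ i, IsPrefixOf (wn q i) p → IsPrefixOf (wk q i) x) ⟨z, hz⟩
  exact phi_sat_unique hd hsat hz

theorem mem_phi {q p : Baire} (hd : (Phi q p).Dom) {z : Baire}
    (hz : ∀ i, IsPrefixOf (wn q i) p → IsPrefixOf (wk q i) z) : z ∈ Phi q p :=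
  ⟨hd, phi_get_eq hd hz⟩

end WadgeAux
section CpairAux

/-! ### Cantor pairing lemmas -/

private def tri (s : ℕ) : ℕ := s * (s + 1) / 2

theorem cpair_eq_tri (n k : ℕ) : cpair n k = tri (n + k) + k := rfl

theorem tri_succ (s : ℕ) : tri (s + 1) = tri s + (s + 1) := by
  have h : (s + 1) * (s + 1 + 1) = s * (s + 1) + (s + 1) * 2 := by ring
  rw [tri, h, Nat.add_mul_div_right _ _ (by norm_num)]
  rfl

theorem le_tri (s : ℕ) : s ≤ tri s := by
  induction s with
  | zero => simp [tri]
  | succ s ih => rw [tri_succ]; omega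

theorem cpair_succ_zero (k : ℕ) : cpair (k + 1) 0 = cpair 0 k + 1 := by
  simp only [cpair_eq_tri]
  rw [tri_succ]
  simp only [Nat.zero_add]
  omega

theorem cpair_succ_k (n k : ℕ) : cpair n (k + 1) = cpair (n + 1) k + 1 := by
  simp only [cpair_eq_tri]
  have : n + (k + 1) = n + 1 + k := by omega
  rw [this]
  omega

def cunAux (m : ℕ) : ℕ × ℕ :=
  Nat.rec (motive := fun _ => ℕ × ℕ) (0, 0)
    (fun _ x => if x.1 = 0 then (x.2 + 1, 0) else (x.1 - 1, x.2 + 1)) m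

theorem cunAux_zero : cunAux 0 = (0, 0) := rfl

theorem cunAux_succ (m : ℕ) : cunAux (m + 1) =
    (if (cunAux m).1 = 0 then ((cunAux m).2 + 1, 0) else ((cunAux m).1 - 1, (cunAux m).2 + 1)) :=
  rfl

theorem cpair_zero : cpair 0 0 = 0 := rfl

theorem k_le_cpair (n k : ℕ) : k ≤ cpair n k := by
  rw [cpair_eq_tri]; omega

theorem cpair_eq_zero {n k : ℕ} (h : cpair n k = 0) : n = 0 ∧ k = 0 := by
  have hk : k = 0 := by have := k_le_cpair n k; omega
  subst hk
  have hn : n ≤ tri n := le_tri n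
  rw [cpair_eq_tri] at h
  simp only [Nat.add_zero] at h
  omega

theorem cunAux_cpair : ∀ m n k, cpair n k = m → cunAux m = (n, k) := by
  intro m
  induction m with
  | zero =>
    intro n k h
    obtain ⟨hn, hk⟩ := cpair_eq_zero h
    subst hn; subst hk; rfl
  | succ m ih =>
    intro n k h
    cases k with
    | zero =>
      cases n with
      | zero => simp [cpair_zero] at h
      | succ n' =>
        have h' : cpair 0 n' = m := by
          have := cpair_succ_zero n'
          omega
        have := ih 0 n' h'
        rw [cunAux_succ, this]
        simp
    | succ k' =>
      have h' : cpair (n + 1) k' = m := by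
        have := cpair_succ_k n k'
        omega
      have := ih (n + 1) k' h'
      rw [cunAux_succ, this]
      simp

theorem cpair_cunAux (m : ℕ) : cpair (cunAux m).1 (cunAux m).2 = m := by
  induction m with
  | zero => rfl
  | succ m ih =>
    rw [cunAux_succ]
    by_cases h : (cunAux m).1 = 0
    · simp only [h, if_true]
      rw [cpair_succ_zero, ← h, ih]
    · simp only [h, if_false]
      rcases Nat.exists_eq_succ_of_ne_zero h with ⟨n', hn'⟩
      have h2 : (cunAux m).1 = n' + 1 := hn'
      rw [h2]
      simp only [Nat.add_sub_cancel]
      rw [cpair_succ_k, ← h2, ih]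

theorem cunpair_eq_cunAux (m : ℕ) : cunpair m = cunAux m := by
  have hspec : cpair (cunpair m).1 (cunpair m).2 = m :=
    Classical.epsilon_spec (p := fun x : ℕ × ℕ => cpair x.1 x.2 = m)
      ⟨cunAux m, cpair_cunAux m⟩
  have := cunAux_cpair m (cunpair m).1 (cunpair m).2 hspec
  rw [this]

theorem cunpair_cpair (n k : ℕ) : cunpair (cpair n k) = (n, k) := by
  rw [cunpair_eq_cunAux]
  exact cunAux_cpair _ n k rfl

theorem word_encode (l : List ℕ) : word (Encodable.encode l) = l :=
  Denumerable.ofNat_encode l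

theorem wn_cpair (q : Baire) (i : ℕ) {a b : List ℕ}
    (h : q i = cpair (Encodable.encode a) (Encodable.encode b)) : wn q i = a := by
  rw [wn, h, cunpair_cpair]
  exact word_encode a

theorem wk_cpair (q : Baire) (i : ℕ) {a b : List ℕ}
    (h : q i = cpair (Encodable.encode a) (Encodable.encode b)) : wk q i = b := by
  rw [wk, h, cunpair_cpair]
  exact word_encode b

end CpairAux
section ForwardAux

open List

/-! ### map-range lemmas -/

theorem mapRange_succ {α : Type*} (g : ℕ → α) (n : ℕ) :
    (List.range (n + 1)).map g = (List.range n).map g ++ [g n] := by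
  rw [List.range_succ, List.map_append]; rfl

theorem mapRange_take {α : Type*} (g : ℕ → α) {m n : ℕ} (h : m ≤ n) :
    ((List.range n).map g).take m = (List.range m).map g := by
  rw [← List.map_take, List.take_range, Nat.min_eq_left h]

theorem mapRange_prefix {α : Type*} (g : ℕ → α) {m n : ℕ} (h : m ≤ n) :
    (List.range m).map g <+: (List.range n).map g := by
  rw [← mapRange_take g h]; exact List.take_prefix _ _

theorem histN_def (x : Baire) (n : ℕ) : histN x n = (List.range n).map x := rfl

theorem histW_def (xs : ℕ → List ℕ) (n : ℕ) : histW xs n = (List.range n).map xs := rfl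

theorem histW_flatten (ys : ℕ → List ℕ) (n : ℕ) : (histW ys n).flatten = concatN ys n := rfl

/-! ### The strategy extracted from a discontinuity function approximation -/

/-- The simulated code list: `goQ h l n` is the list `[q 0, …, q (n-1)]` built from
Player II's moves `l`. -/
def goQ (h : List ℕ → List ℕ) (l : List (List ℕ)) (n : ℕ) : List ℕ :=
  Nat.rec (motive := fun _ => List ℕ) []
    (fun m ih => ih ++
      [cpair (Encodable.encode (h ih)) (Encodable.encode ((l.take (m + 1)).flatten))]) n

theorem goQ_zero (h : List ℕ → List ℕ) (l : List (List ℕ)) : goQ h l 0 = [] := rfl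

theorem goQ_succ (h : List ℕ → List ℕ) (l : List (List ℕ)) (n : ℕ) :
    goQ h l (n + 1) = goQ h l n ++
      [cpair (Encodable.encode (h (goQ h l n))) (Encodable.encode ((l.take (n + 1)).flatten))] :=
  rfl

theorem goQ_take (h : List ℕ → List ℕ) (l : List (List ℕ)) {n m : ℕ} (hn : n ≤ m) :
    goQ h (l.take m) n = goQ h l n := by
  induction n with
  | zero => rfl
  | succ n ih =>
    rw [goQ_succ, goQ_succ, ih (by omega), List.take_take, Nat.min_eq_left (by omega)]

theorem goQ_prefix_eq (h : List ℕ → List ℕ) {u l : List (List ℕ)} (hu : u <+: l) {n : ℕ}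
    (hn : n ≤ u.length) : goQ h u n = goQ h l n := by
  rw [List.prefix_iff_eq_take.mp hu, goQ_take h l hn]

/-- The strategy for Player I extracted from `h`. -/
def sigmaW (h : List ℕ → List ℕ) (l : List (List ℕ)) : List ℕ :=
  (h (goQ h l l.length)).drop
    (Nat.rec (motive := fun _ => ℕ) 0 (fun m _ => (h (goQ h l m)).length) l.length)

section Run

variable (h : List ℕ → List ℕ) (ys : ℕ → List ℕ)

/-- Player I's moves when playing `sigmaW h` against `ys`. -/
def xsW : ℕ → List ℕ := fun i => sigmaW h (histW ys i)

/-- The code built during the run. -/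
def qfW : Baire := fun j =>
  cpair (Encodable.encode (h (goQ h (histW ys j) j))) (Encodable.encode (concatN ys (j + 1)))

theorem goQ_histW (n : ℕ) : goQ h (histW ys n) n = histN (qfW h ys) n := by
  induction n with
  | zero => rfl
  | succ n ih =>
    rw [goQ_succ]
    have h1 : goQ h (histW ys n) n = goQ h (histW ys (n + 1)) n :=
      goQ_prefix_eq (u := histW ys n) h (by rw [histW_def, histW_def]; exact mapRange_prefix ys (Nat.le_succ n)) (by simp [histW_def])
    have h2 : (histW ys (n + 1)).take (n + 1) = histW ys (n + 1) := by
      rw [histW_def]; exact mapRange_take ys (le_refl (n + 1))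
    have h3 : qfW h ys n = cpair (Encodable.encode (h ((List.range n).map (qfW h ys))))
        (Encodable.encode (concatN ys (n + 1))) := by
      show cpair (Encodable.encode (h (goQ h (histW ys n) n))) _ = _
      rw [ih, histN_def]
    rw [← h1, h2, ih, histW_flatten]
    simp only [histN_def]
    rw [mapRange_succ, h3]

variable (hm : MonotoneWord h)
include hm

theorem concatN_xsW (n : ℕ) : concatN (xsW h ys) (n + 1) = h (histN (qfW h ys) n) := by
  induction n with
  | zero =>
    rw [concatN_succ, concatN_zero, List.nil_append]
    show sigmaW h (histW ys 0) = _
    rfl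
  | succ n ih =>
    rw [concatN_succ, ih]
    have hx : xsW h ys (n + 1) = (h (histN (qfW h ys) (n + 1))).drop
        (h (histN (qfW h ys) n)).length := by
      show sigmaW h (histW ys (n + 1)) = _
      rw [sigmaW]
      have hl : (histW ys (n + 1)).length = n + 1 := by simp [histW]
      rw [hl]
      have e1 : goQ h (histW ys (n + 1)) (n + 1) = histN (qfW h ys) (n + 1) :=
        goQ_histW h ys (n + 1)
      have e2 : goQ h (histW ys (n + 1)) n = histN (qfW h ys) n := by
        rw [← goQ_prefix_eq (u := histW ys n) h
          (by rw [histW_def, histW_def]; exact mapRange_prefix ys (Nat.le_succ n))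
          (by simp [histW_def])]
        exact goQ_histW h ys n
      rw [e1]
      show (h (histN (qfW h ys) (n + 1))).drop (h (goQ h (histW ys (n + 1)) n)).length = _
      rw [e2]
    rw [hx]
    have hpre : histN (qfW h ys) n <+: histN (qfW h ys) (n + 1) := by
      rw [histN_def, histN_def]; exact mapRange_prefix (qfW h ys) (Nat.le_succ n)
    obtain ⟨t, ht⟩ := hm _ _ hpre
    rw [← ht, List.drop_left]

theorem qfW_eq (j : ℕ) : qfW h ys j =
    cpair (Encodable.encode (concatN (xsW h ys) (j + 1))) (Encodable.encode (concatN ys (j + 1))) := by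
  rw [qfW, goQ_histW, concatN_xsW h ys hm]

theorem wn_qfW (j : ℕ) : wn (qfW h ys) j = concatN (xsW h ys) (j + 1) :=
  wn_cpair _ j (qfW_eq h ys hm j)

theorem wk_qfW (j : ℕ) : wk (qfW h ys) j = concatN ys (j + 1) :=
  wk_cpair _ j (qfW_eq h ys hm j)

end Run

/-- The forward direction. -/
theorem forward_winning {f : Problem} {D : Baire → Baire} {h : List ℕ → List ℕ}
    (hm : MonotoneWord h) (ha : Approximates h (fun p => Part.some (D p)))
    (hdisc : DiscontinuityFunction D f) : WadgeWinningI f (sigmaW h) := by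
  intro ys
  set xs : ℕ → List ℕ := fun i => sigmaW h (histW ys i) with hxs
  have hxs' : xs = xsW h ys := rfl
  set q : Baire := qfW h ys with hq
  have hpref : ∀ n, IsPrefixOf (concatN xs n) (D q) := by
    intro n
    cases n with
    | zero => exact isPrefixOf_nil _
    | succ n =>
      rw [hxs', concatN_xsW h ys hm]
      have := (ha q trivial).1 (histN q n) (isPrefixOf_histN q n)
      exact this
  have hpinf : PlayInf xs := by
    intro m
    obtain ⟨v, hv, hlen⟩ := (ha q trivial).2 m
    refine ⟨v.length + 1, ?_⟩
    have hveq : v = histN q v.length := hv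
    rw [hxs', concatN_xsW h ys hm, ← hveq]
    exact hlen
  have hDq : D q = playLim xs := playLim_unique hpinf hpref
  intro hW
  obtain ⟨hyinf, hymem⟩ := hW ⟨hpinf, by rw [← hDq]; exact (hdisc q).1⟩
  have hdom : (Phi q (D q)).Dom := by
    refine ⟨?_, ?_⟩
    · intro i j _
      rw [wk_qfW h ys hm, wk_qfW h ys hm]
      rcases Nat.le_total i j with h' | h'
      · exact Or.inl (concatN_prefix ys (by omega))
      · exact Or.inr (concatN_prefix ys (by omega))
    · intro m
      obtain ⟨n, hn⟩ := hyinf m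
      refine ⟨n, ?_, ?_⟩
      · rw [wn_qfW h ys hm]; exact hpref (n + 1)
      · rw [wk_qfW h ys hm]
        exact lt_of_lt_of_le hn (concatN_prefix ys (Nat.le_succ n)).length_le
  have hmem : playLim ys ∈ Phi q (D q) := by
    apply mem_phi hdom
    intro i _
    rw [wk_qfW h ys hm]
    exact playLim_isPrefix ys (i + 1)
  have := (hdisc q).2 (playLim ys) hmem
  rw [hDq] at this
  exact this hymem

end ForwardAux
section BackwardAux

open List

/-! ### Decoded words, computably -/

def wnL (t : ℕ) : List ℕ := word (cunAux t).1

def wkL (t : ℕ) : List ℕ := word (cunAux t).2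

theorem wnL_eq (q : Baire) (j : ℕ) : wnL (q j) = wn q j := by
  rw [wnL, wn, cunpair_eq_cunAux]

theorem wkL_eq (q : Baire) (j : ℕ) : wkL (q j) = wk q j := by
  rw [wkL, wk, cunpair_eq_cunAux]

/-! ### The best candidate answer word -/

/-- The longest `wk` among indices `j < m` whose `wn` is a prefix of `X`. -/
def bestK (v : List ℕ) (X : List ℕ) (m : ℕ) : List ℕ :=
  Nat.rec (motive := fun _ => List ℕ) []
    (fun j acc =>
      if wnL (v.getD j 0) = X.take (wnL (v.getD j 0)).length ∧
          acc.length < (wkL (v.getD j 0)).length then wkL (v.getD j 0) else acc) m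

theorem bestK_succ (v X : List ℕ) (m : ℕ) :
    bestK v X (m + 1) =
      if wnL (v.getD m 0) = X.take (wnL (v.getD m 0)).length ∧
          (bestK v X m).length < (wkL (v.getD m 0)).length then wkL (v.getD m 0)
      else bestK v X m := rfl

theorem bestK_cases (v X : List ℕ) (m : ℕ) :
    bestK v X m = [] ∨
      ∃ j, j < m ∧ wnL (v.getD j 0) <+: X ∧ bestK v X m = wkL (v.getD j 0) := by
  induction m with
  | zero => exact Or.inl rfl
  | succ m ih =>
    rw [bestK_succ]
    split_ifs with hc
    · exact Or.inr ⟨m, Nat.lt_succ_self m, List.prefix_iff_eq_take.mpr hc.1, rfl⟩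
    · rcases ih with h | ⟨j, hj, hpre, heq⟩
      · exact Or.inl h
      · exact Or.inr ⟨j, hj.trans (Nat.lt_succ_self m), hpre, heq⟩

theorem bestK_le (v X : List ℕ) {m j : ℕ} (hj : j < m) (hpre : wnL (v.getD j 0) <+: X) :
    (wkL (v.getD j 0)).length ≤ (bestK v X m).length := by
  induction m with
  | zero => omega
  | succ m ih =>
    rw [bestK_succ]
    rcases Nat.lt_or_ge j m with h' | h'
    · have := ih h'
      split_ifs with hc
      · omega
      · exact this
    · have hjm : j = m := by omega
      subst hjm
      split_ifs with hc
      · exact le_refl _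
      · rw [not_and_or] at hc
        rcases hc with hc | hc
        · exact absurd (List.prefix_iff_eq_take.mp hpre) hc
        · omega

theorem bestK_getD_congr {v v' : List ℕ} (X : List ℕ) (m : ℕ)
    (h : ∀ j, j < m → v.getD j 0 = v'.getD j 0) : bestK v X m = bestK v' X m := by
  induction m with
  | zero => rfl
  | succ m ih =>
    rw [bestK_succ, bestK_succ, h m (Nat.lt_succ_self m),
      ih (fun j hj => h j (hj.trans (Nat.lt_succ_self m)))]

theorem getD_take {v : List ℕ} {j m : ℕ} (h : j < m) : (v.take m).getD j 0 = v.getD j 0 := by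
  simp [List.getD_eq_getElem?_getD, List.getElem?_take, h]

theorem histN_getD (q : Baire) {j n : ℕ} (h : j < n) : (histN q n).getD j 0 = q j := by
  rw [histN_def]
  simp [List.getD_eq_getElem?_getD, List.getElem?_map, List.getElem?_range, h]

/-! ### The simulation of the Wadge game along a code -/

/-- `goSim σ v n` is the pair (Player I's moves, Player II's moves) after `n` rounds of the
Wadge game in which Player I follows `σ` and Player II plays according to the code `v`. -/
def goSim (σ : List (List ℕ) → List ℕ) (v : List ℕ) (n : ℕ) :
    List (List ℕ) × List (List ℕ) :=
  Nat.rec (motive := fun _ => List (List ℕ) × List (List ℕ)) ([], [])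
    (fun i XY =>
      (XY.1 ++ [σ XY.2],
       XY.2 ++ [if XY.2.flatten =
            (bestK v ((XY.1 ++ [σ XY.2]).flatten) (i + 1)).take XY.2.flatten.length
          then (bestK v ((XY.1 ++ [σ XY.2]).flatten) (i + 1)).drop XY.2.flatten.length
          else []])) n

theorem goSim_succ (σ : List (List ℕ) → List ℕ) (v : List ℕ) (n : ℕ) :
    goSim σ v (n + 1) =
      ((goSim σ v n).1 ++ [σ (goSim σ v n).2],
       (goSim σ v n).2 ++ [if (goSim σ v n).2.flatten =
            (bestK v (((goSim σ v n).1 ++ [σ (goSim σ v n).2]).flatten) (n + 1)).take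
              (goSim σ v n).2.flatten.length
          then (bestK v (((goSim σ v n).1 ++ [σ (goSim σ v n).2]).flatten) (n + 1)).drop
              (goSim σ v n).2.flatten.length
          else []]) := rfl

theorem goSim_getD_congr (σ : List (List ℕ) → List ℕ) {v v' : List ℕ} (n : ℕ)
    (h : ∀ j, j < n → v.getD j 0 = v'.getD j 0) : goSim σ v n = goSim σ v' n := by
  induction n with
  | zero => rfl
  | succ n ih =>
    have ih' := ih (fun j hj => h j (hj.trans (Nat.lt_succ_self n)))
    rw [goSim_succ, goSim_succ, ih', bestK_getD_congr _ (n + 1) h]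

/-- Player II's moves in the game simulated along the code `q`. -/
def ysBack (σ : List (List ℕ) → List ℕ) (q : Baire) : ℕ → List ℕ :=
  fun i => (goSim σ (histN q (i + 1)) (i + 1)).2.getD i []

/-- Player I's moves in the game simulated along the code `q`. -/
def xsBack (σ : List (List ℕ) → List ℕ) (q : Baire) : ℕ → List ℕ :=
  fun i => σ (histW (ysBack σ q) i)

/-- The discontinuity function extracted from the strategy `σ`. -/
noncomputable def DBack (σ : List (List ℕ) → List ℕ) (q : Baire) : Baire :=
  playLim (xsBack σ q)

/-- The word function witnessing computability of `DBack`. -/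
def hBack (σ : List (List ℕ) → List ℕ) (v : List ℕ) : List ℕ :=
  ((goSim σ v v.length).1).flatten

theorem getD_concat_length {α : Type*} (l : List α) (a d : α) : (l ++ [a]).getD l.length d = a := by
  simp [List.getD_eq_getElem?_getD, List.getElem?_concat_length]

theorem getD_append_length {α : Type*} {l : List α} {n : ℕ} (h : l.length = n) (a d : α) :
    (l ++ [a]).getD n d = a := by subst h; exact getD_concat_length l a d

section RunBack

variable (σ : List (List ℕ) → List ℕ) (q : Baire)

/-- The candidate answer at round `i`. -/
def KQ (i : ℕ) : List ℕ :=
  bestK (histN q (i + 1)) (concatN (xsBack σ q) (i + 1)) (i + 1)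

theorem goSim_histN : ∀ n, goSim σ (histN q n) n =
    (histW (xsBack σ q) n, histW (ysBack σ q) n) := by
  intro n
  induction n with
  | zero => rfl
  | succ n ih =>
    have hstab : goSim σ (histN q (n + 1)) n = goSim σ (histN q n) n :=
      goSim_getD_congr σ n (fun j hj =>
        (histN_getD q (hj.trans (Nat.lt_succ_self n))).trans (histN_getD q hj).symm)
    have hflat : (histW (xsBack σ q) n ++ [σ (histW (ysBack σ q) n)]).flatten =
        concatN (xsBack σ q) (n + 1) := by
      have h' : histW (xsBack σ q) n ++ [σ (histW (ysBack σ q) n)] =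
          histW (xsBack σ q) (n + 1) := by
        rw [histW_def (xsBack σ q) (n + 1), mapRange_succ]; rfl
      rw [h', histW_flatten]
    have hlen : (histW (ysBack σ q) n).length = n := by simp [histW_def]
    have hys : ysBack σ q n =
        (if (histW (ysBack σ q) n).flatten =
            (KQ σ q n).take (histW (ysBack σ q) n).flatten.length
          then (KQ σ q n).drop (histW (ysBack σ q) n).flatten.length else []) := by
      show (goSim σ (histN q (n + 1)) (n + 1)).2.getD n [] = _
      rw [goSim_succ, hstab, ih]
      simp only
      rw [getD_append_length hlen]
      simp only [KQ, hflat]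
      congr
    rw [goSim_succ, hstab, ih]
    refine Prod.ext ?_ ?_ <;> simp only
    · rw [histW_def (xsBack σ q) (n + 1), mapRange_succ]; rfl
    · have h3 : histW (ysBack σ q) (n + 1) = histW (ysBack σ q) n ++ [ysBack σ q n] := by
        rw [histW_def (ysBack σ q) (n + 1), mapRange_succ, ← histW_def]
      rw [h3]
      congr 1
      rw [hys]
      simp only [KQ, hflat]
      congr

theorem hBack_histN (n : ℕ) : hBack σ (histN q n) = concatN (xsBack σ q) n := by
  rw [hBack]
  have hlen : (histN q n).length = n := by simp [histN_def]
  rw [hlen, goSim_histN, histW_flatten]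

theorem ysBack_step (n : ℕ) : ysBack σ q n =
    (if concatN (ysBack σ q) n = (KQ σ q n).take (concatN (ysBack σ q) n).length
      then (KQ σ q n).drop (concatN (ysBack σ q) n).length else []) := by
  have h1 := goSim_histN σ q (n + 1)
  have hstab : goSim σ (histN q (n + 1)) n = goSim σ (histN q n) n :=
    goSim_getD_congr σ n (fun j hj =>
      (histN_getD q (hj.trans (Nat.lt_succ_self n))).trans (histN_getD q hj).symm)
  rw [goSim_succ, hstab, goSim_histN σ q n] at h1
  have h2 := congrArg Prod.snd h1
  simp only at h2
  have h3 : histW (ysBack σ q) (n + 1) = histW (ysBack σ q) n ++ [ysBack σ q n] := by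
    rw [histW_def (ysBack σ q) (n + 1), mapRange_succ, ← histW_def]
  rw [h3] at h2
  have h4 := List.append_cancel_left h2
  have h5 : (if (histW (ysBack σ q) n).flatten =
        (bestK (histN q (n + 1))
            ((histW (xsBack σ q) n ++ [σ (histW (ysBack σ q) n)]).flatten) (n + 1)).take
          (histW (ysBack σ q) n).flatten.length
      then (bestK (histN q (n + 1))
            ((histW (xsBack σ q) n ++ [σ (histW (ysBack σ q) n)]).flatten) (n + 1)).drop
          (histW (ysBack σ q) n).flatten.length
      else []) = ysBack σ q n := by simpa using h4
  have hflat : (histW (xsBack σ q) n ++ [σ (histW (ysBack σ q) n)]).flatten =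
      concatN (xsBack σ q) (n + 1) := by
    have h' : histW (xsBack σ q) n ++ [σ (histW (ysBack σ q) n)] =
        histW (xsBack σ q) (n + 1) := by
      rw [histW_def (xsBack σ q) (n + 1), mapRange_succ]; rfl
    rw [h', histW_flatten]
  rw [← h5]
  simp only [KQ, hflat, histW_flatten]
  congr

end RunBack

end BackwardAux
section ChainBack

open List

variable (σ : List (List ℕ) → List ℕ) (q : Baire)

theorem KQ_cases (i : ℕ) : KQ σ q i = [] ∨
    ∃ j, j ≤ i ∧ wn q j <+: concatN (xsBack σ q) (i + 1) ∧ KQ σ q i = wk q j := by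
  unfold KQ
  rcases bestK_cases (histN q (i + 1)) (concatN (xsBack σ q) (i + 1)) (i + 1) with
    h | ⟨j, hj, hpre, heq⟩
  · exact Or.inl h
  · right
    refine ⟨j, by omega, ?_, ?_⟩
    · rwa [histN_getD q hj, wnL_eq] at hpre
    · rwa [histN_getD q hj, wkL_eq] at heq

theorem KQ_le {i j : ℕ} (hj : j ≤ i) (hpre : wn q j <+: concatN (xsBack σ q) (i + 1)) :
    (wk q j).length ≤ (KQ σ q i).length := by
  unfold KQ
  have hlt : j < i + 1 := by omega
  have h := bestK_le (histN q (i + 1)) (X := concatN (xsBack σ q) (i + 1))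
    (j := j) (m := i + 1) hlt (by rwa [histN_getD q hlt, wnL_eq])
  rwa [histN_getD q hlt, wkL_eq] at h

variable (hcons : ConsistentCode q)
include hcons

theorem KQ_step {i j : ℕ} (hj : j ≤ i) (hpre : wn q j <+: concatN (xsBack σ q) (i + 1)) :
    wk q j <+: KQ σ q i := by
  rcases KQ_cases σ q i with h | ⟨j', hj', hpre', heq⟩
  · have := KQ_le σ q hj hpre
    rw [h] at this ⊢
    simp at this
    simp [this]
  · have hcomp : WordComparable (wk q j) (wk q j') :=
      hcons j j' (List.prefix_or_prefix_of_prefix hpre hpre')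
    have hle : (wk q j).length ≤ (wk q j').length := by
      have := KQ_le σ q hj hpre
      rwa [heq] at this
    rw [heq]
    rcases hcomp with h' | h'
    · exact h'
    · rw [h'.eq_of_length_le hle]

theorem KQ_mono (i : ℕ) : KQ σ q i <+: KQ σ q (i + 1) := by
  rcases KQ_cases σ q i with h | ⟨j, hj, hpre, heq⟩
  · rw [h]; exact List.nil_prefix
  · rw [heq]
    refine KQ_step σ q hcons (by omega) (hpre.trans ?_)
    exact concatN_prefix _ (by omega)

theorem Y_main : ∀ i, concatN (ysBack σ q) (i + 1) = KQ σ q i := by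
  have key : ∀ i, concatN (ysBack σ q) i <+: KQ σ q i →
      concatN (ysBack σ q) (i + 1) = KQ σ q i := by
    intro i hpre
    rw [concatN_succ, ysBack_step σ q i, if_pos (List.prefix_iff_eq_take.mp hpre)]
    obtain ⟨t, ht⟩ := hpre
    rw [← ht, List.drop_left]
  intro i
  induction i with
  | zero => exact key 0 (by rw [concatN_zero]; exact List.nil_prefix)
  | succ i ih =>
    refine key (i + 1) ?_
    rw [ih]
    exact KQ_mono σ q hcons i

end ChainBack

section BackMain

open List

theorem flatten_prefix {l l' : List (List ℕ)} (h : l <+: l') : l.flatten <+: l'.flatten := by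
  obtain ⟨t, ht⟩ := h
  rw [← ht, List.flatten_append]
  exact List.prefix_append _ _

theorem goSim_fst_prefix (σ : List (List ℕ) → List ℕ) (v : List ℕ) {m n : ℕ} (h : m ≤ n) :
    (goSim σ v m).1 <+: (goSim σ v n).1 := by
  induction n with
  | zero =>
    have : m = 0 := by omega
    subst this; exact List.prefix_refl _
  | succ n ih =>
    rcases Nat.lt_or_ge m (n + 1) with h' | h'
    · refine (ih (by omega)).trans ?_
      rw [goSim_succ]
      exact List.prefix_append _ _
    · have : m = n + 1 := by omega
      subst this; exact List.prefix_refl _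

theorem hBack_mono (σ : List (List ℕ) → List ℕ) : MonotoneWord (hBack σ) := by
  intro u v huv
  rw [hBack, hBack]
  have h1 : goSim σ u u.length = goSim σ v u.length := by
    apply goSim_getD_congr
    intro j hj
    rw [List.prefix_iff_eq_take.mp huv, getD_take hj]
  rw [h1]
  exact flatten_prefix (goSim_fst_prefix σ v huv.length_le)

/-- The backward direction: from a winning strategy to a discontinuity function. -/
theorem backward_main {f : Problem} {σ : List (List ℕ) → List ℕ}
    (hwin : WadgeWinningI f σ) :
    MonotoneWord (hBack σ) ∧ Approximates (hBack σ) (fun p => Part.some (DBack σ p)) ∧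
      DiscontinuityFunction (DBack σ) f := by
  have hrun : ∀ q : Baire, PlayInf (xsBack σ q) ∧ (f (playLim (xsBack σ q))).Nonempty ∧
      ¬(PlayInf (ysBack σ q) ∧ playLim (ysBack σ q) ∈ f (playLim (xsBack σ q))) := by
    intro q
    have h := hwin (ysBack σ q)
    unfold WadgeIIWins at h
    rw [Classical.not_imp] at h
    have hx : (fun i => σ (histW (ysBack σ q) i)) = xsBack σ q := rfl
    rw [hx] at h
    exact ⟨h.1.1, h.1.2, h.2⟩
  refine ⟨hBack_mono σ, ?_, ?_⟩
  · intro q _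
    refine ⟨?_, ?_⟩
    · intro v hv
      rw [Part.get_some]
      have hveq : v = histN q v.length := hv
      rw [hveq, hBack_histN]
      exact playLim_isPrefix _ _
    · intro m
      obtain ⟨n, hn⟩ := (hrun q).1 m
      refine ⟨histN q n, isPrefixOf_histN q n, ?_⟩
      rw [hBack_histN]
      exact hn
  · intro q
    refine ⟨(hrun q).2.1, ?_⟩
    intro y hy hyf
    obtain ⟨hd, hget⟩ := hy
    have hcons : ConsistentCode q := hd.1
    have hfind : ∀ j, IsPrefixOf (wn q j) (DBack σ q) →
        ∃ i, j ≤ i ∧ wn q j <+: concatN (xsBack σ q) (i + 1) := by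
      intro j hj
      obtain ⟨n, hn⟩ := (hrun q).1 (wn q j).length
      refine ⟨max j n, le_max_left _ _, ?_⟩
      refine IsPrefixOf.prefix_of_le hj (playLim_isPrefix _ _) ?_
      calc (wn q j).length ≤ (concatN (xsBack σ q) n).length := le_of_lt hn
        _ ≤ _ := (concatN_prefix _ (by omega)).length_le
    have hsat : ∀ j, IsPrefixOf (wn q j) (DBack σ q) →
        IsPrefixOf (wk q j) (playLim (ysBack σ q)) := by
      intro j hj
      obtain ⟨i, hji, hpre⟩ := hfind j hj
      have h1 : wk q j <+: KQ σ q i := KQ_step σ q hcons hji hpre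
      rw [← Y_main σ q hcons i] at h1
      exact IsPrefixOf.mono h1 (playLim_isPrefix (ysBack σ q) (i + 1))
    have hyinf : PlayInf (ysBack σ q) := by
      intro m
      obtain ⟨j, hj, hlen⟩ := hd.2 m
      obtain ⟨i, hji, hpre⟩ := hfind j hj
      refine ⟨i + 1, ?_⟩
      have h1 : wk q j <+: KQ σ q i := KQ_step σ q hcons hji hpre
      rw [← Y_main σ q hcons i] at h1
      exact lt_of_lt_of_le hlen h1.length_le
    have hy_eq : y = playLim (ysBack σ q) := by
      rw [← hget]; exact phi_get_eq hd hsat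
    exact ((hrun q).2.2) ⟨hyinf, hy_eq ▸ hyf⟩

end BackMain
section CompAux

open Primrec

theorem primrec_cpair : Primrec₂ cpair := by
  have : Primrec₂ (fun n k : ℕ => (n + k) * (n + k + 1) / 2 + k) :=
    Primrec₂.comp₂ Primrec.nat_add
      (Primrec₂.comp₂ Primrec.nat_div
        (Primrec₂.comp₂ Primrec.nat_mul
          (Primrec₂.comp₂ Primrec.nat_add Primrec₂.left Primrec₂.right)
          (Primrec₂.comp₂ Primrec.nat_add
            (Primrec₂.comp₂ Primrec.nat_add Primrec₂.left Primrec₂.right)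
            (Primrec₂.const 1)))
        (Primrec₂.const 2))
      Primrec₂.right
  exact this

theorem primrec_cunAux : Primrec cunAux := by
  have hstep : Primrec₂ (fun (_ : ℕ) (x : ℕ × ℕ) =>
      if x.1 = 0 then (x.2 + 1, 0) else (x.1 - 1, x.2 + 1)) := by
    have h : Primrec (fun p : ℕ × (ℕ × ℕ) =>
        if p.2.1 = 0 then (p.2.2 + 1, 0) else (p.2.1 - 1, p.2.2 + 1)) := by
      apply Primrec.ite
      · exact PrimrecRel.comp Primrec.eq (Primrec.fst.comp Primrec.snd) (Primrec.const 0)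
      · exact Primrec.pair (Primrec.succ.comp (Primrec.snd.comp Primrec.snd)) (Primrec.const 0)
      · exact Primrec.pair
          (Primrec.pred.comp (Primrec.fst.comp Primrec.snd))
          (Primrec.succ.comp (Primrec.snd.comp Primrec.snd))
    exact Primrec.to₂ h
  exact Primrec.nat_rec₁ (0, 0) hstep

theorem primrec_word : Primrec word := Primrec.ofNat (List ℕ)

theorem primrec_wnL : Primrec wnL :=
  primrec_word.comp (Primrec.fst.comp primrec_cunAux)

theorem primrec_wkL : Primrec wkL :=
  primrec_word.comp (Primrec.snd.comp primrec_cunAux)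

theorem take_eq_map_range {α : Type*} [Inhabited α] (l : List α) (n : ℕ) :
    l.take n = (List.range (min n l.length)).map l.getI := by
  apply List.ext_getElem (by simp)
  intro k h1 h2
  simp only [List.getElem_take, List.getElem_map, List.getElem_range]
  rw [List.getI_eq_getElem]

theorem drop_eq_map_range {α : Type*} [Inhabited α] (l : List α) (n : ℕ) :
    l.drop n = (List.range (l.length - n)).map (fun i => l.getI (n + i)) := by
  apply List.ext_getElem (by simp)
  intro k h1 h2
  simp only [List.getElem_drop, List.getElem_map, List.getElem_range]
  rw [List.getI_eq_getElem]

theorem primrec_list_take {α : Type*} [Primcodable α] [Inhabited α] :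
    Primrec₂ (fun (l : List α) (n : ℕ) => l.take n) := by
  have h : Primrec (fun p : List α × ℕ =>
      (List.range (min p.2 p.1.length)).map p.1.getI) := by
    apply Primrec.list_map
      (f := fun p : List α × ℕ => List.range (min p.2 p.1.length))
      (g := fun (p : List α × ℕ) (i : ℕ) => p.1.getI i)
    · exact Primrec.list_range.comp
        (Primrec.nat_min.comp Primrec.snd (Primrec.list_length.comp Primrec.fst))
    · exact (Primrec.list_getI.comp (Primrec.fst.comp Primrec.fst) Primrec.snd).to₂
  exact (h.of_eq fun p => (take_eq_map_range p.1 p.2).symm).to₂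

theorem primrec_list_drop {α : Type*} [Primcodable α] [Inhabited α] :
    Primrec₂ (fun (l : List α) (n : ℕ) => l.drop n) := by
  have h : Primrec (fun p : List α × ℕ =>
      (List.range (p.1.length - p.2)).map (fun i => p.1.getI (p.2 + i))) := by
    apply Primrec.list_map
      (f := fun p : List α × ℕ => List.range (p.1.length - p.2))
      (g := fun (p : List α × ℕ) (i : ℕ) => p.1.getI (p.2 + i))
    · exact Primrec.list_range.comp
        (Primrec.nat_sub.comp (Primrec.list_length.comp Primrec.fst) Primrec.snd)
    · exact (Primrec.list_getI.comp (Primrec.fst.comp Primrec.fst)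
        (Primrec.nat_add.comp (Primrec.snd.comp Primrec.fst) Primrec.snd)).to₂
  exact (h.of_eq fun p => (drop_eq_map_range p.1 p.2).symm).to₂

theorem primrec_bestK : Primrec₂ (fun (p : List ℕ × List ℕ) (m : ℕ) => bestK p.1 p.2 m) := by
  have hg : Primrec₂ (fun (a : List ℕ × List ℕ) (x : ℕ × List ℕ) =>
      if wnL (a.1.getD x.1 0) = a.2.take (wnL (a.1.getD x.1 0)).length ∧
          x.2.length < (wkL (a.1.getD x.1 0)).length then wkL (a.1.getD x.1 0) else x.2) := by
    have hu : Primrec (fun p : (List ℕ × List ℕ) × ℕ × List ℕ => wnL (p.1.1.getD p.2.1 0)) :=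
      primrec_wnL.comp ((Primrec.list_getD 0).comp (Primrec.fst.comp Primrec.fst)
        (Primrec.fst.comp Primrec.snd))
    have hw : Primrec (fun p : (List ℕ × List ℕ) × ℕ × List ℕ => wkL (p.1.1.getD p.2.1 0)) :=
      primrec_wkL.comp ((Primrec.list_getD 0).comp (Primrec.fst.comp Primrec.fst)
        (Primrec.fst.comp Primrec.snd))
    have h : Primrec (fun p : (List ℕ × List ℕ) × ℕ × List ℕ =>
        if wnL (p.1.1.getD p.2.1 0) = p.1.2.take (wnL (p.1.1.getD p.2.1 0)).length ∧
            p.2.2.length < (wkL (p.1.1.getD p.2.1 0)).length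
          then wkL (p.1.1.getD p.2.1 0) else p.2.2) := by
      apply Primrec.ite
      · apply PrimrecPred.and
        · exact PrimrecRel.comp Primrec.eq hu
            (primrec_list_take.comp (Primrec.snd.comp Primrec.fst)
              (Primrec.list_length.comp hu))
        · exact PrimrecRel.comp Primrec.nat_lt
            (Primrec.list_length.comp (Primrec.snd.comp Primrec.snd))
            (Primrec.list_length.comp hw)
      · exact hw
      · exact Primrec.snd.comp Primrec.snd
    exact Primrec.to₂ h
  exact (Primrec.nat_rec (Primrec.const ([] : List ℕ)) hg).of_eq (fun a n => rfl)

end CompAux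
section CompMain

set_option maxHeartbeats 1000000

theorem goQ_computable {h : List ℕ → List ℕ} (hc : Computable h) :
    Computable (fun p : List (List ℕ) × ℕ => goQ h p.1 p.2) := by
  have hstep : Computable₂ (fun (a : List (List ℕ) × ℕ) (x : ℕ × List ℕ) =>
      x.2 ++ [cpair (Encodable.encode (h x.2))
        (Encodable.encode ((a.1.take (x.1 + 1)).flatten))]) := by
    have h1 : Computable (fun p : (List (List ℕ) × ℕ) × ℕ × List ℕ =>
        cpair (Encodable.encode (h p.2.2))
          (Encodable.encode ((p.1.1.take (p.2.1 + 1)).flatten))) := by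
      apply primrec_cpair.to_comp.comp
      · exact Computable.encode.comp (hc.comp (Computable.snd.comp Computable.snd))
      · exact Computable.encode.comp (Primrec.to_comp (Primrec.list_flatten.comp
          (primrec_list_take.comp (Primrec.fst.comp Primrec.fst)
            (Primrec.succ.comp (Primrec.fst.comp Primrec.snd)))))
    exact Computable.to₂ (Primrec.list_concat.to_comp.comp
      (Computable.snd.comp Computable.snd) h1)
  have hrec := Computable.nat_rec (f := fun p : List (List ℕ) × ℕ => p.2)
    (g := fun _ : List (List ℕ) × ℕ => ([] : List ℕ)) Computable.snd
    (Computable.const []) hstep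
  exact hrec.of_eq (fun p => rfl)

theorem sigmaW_computable {h : List ℕ → List ℕ} (hc : Computable h) :
    Computable (sigmaW h) := by
  have hgo := goQ_computable hc
  have hpairA : Computable (fun l : List (List ℕ) => (l, l.length)) :=
    Computable.pair Computable.id Primrec.list_length.to_comp
  have hA0 := hc.comp (hgo.comp hpairA)
  have hA : Computable (fun l : List (List ℕ) => h (goQ h l l.length)) :=
    hA0.of_eq (fun l => rfl)
  have hstep : Computable₂ (fun (l : List (List ℕ)) (x : ℕ × ℕ) =>
      (h (goQ h l x.1)).length) := by
    have hpair1 : Computable (fun p : List (List ℕ) × ℕ × ℕ => (p.1, p.2.1)) :=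
      Computable.pair Computable.fst (Computable.fst.comp Computable.snd)
    have h0 := Primrec.list_length.to_comp.comp (hc.comp (hgo.comp hpair1))
    have h1 : Computable (fun p : List (List ℕ) × ℕ × ℕ => (h (goQ h p.1 p.2.1)).length) :=
      h0.of_eq (fun p => rfl)
    exact Computable.to₂ h1
  have hB : Computable (fun l : List (List ℕ) =>
      Nat.rec (motive := fun _ => ℕ) 0 (fun m _ => (h (goQ h l m)).length) l.length) := by
    have hrec := Computable.nat_rec (f := fun l : List (List ℕ) => l.length)
      (g := fun _ : List (List ℕ) => 0) Primrec.list_length.to_comp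
      (Computable.const 0) hstep
    exact hrec.of_eq (fun l => rfl)
  exact (primrec_list_drop.to_comp.comp hA hB).of_eq (fun l => rfl)

theorem goSim_computable {σ : List (List ℕ) → List ℕ} (hσ : Computable σ) :
    Computable (fun p : List ℕ × ℕ => goSim σ p.1 p.2) := by
  have hF : Primrec (fun p : (List ℕ × (ℕ × (List (List ℕ) × List (List ℕ)))) × List ℕ =>
      (p.1.2.2.1 ++ [p.2],
       p.1.2.2.2 ++ [if p.1.2.2.2.flatten =
            (bestK p.1.1 ((p.1.2.2.1 ++ [p.2]).flatten) (p.1.2.1 + 1)).take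
              p.1.2.2.2.flatten.length
          then (bestK p.1.1 ((p.1.2.2.1 ++ [p.2]).flatten) (p.1.2.1 + 1)).drop
              p.1.2.2.2.flatten.length
          else []])) := by
    have pv : Primrec (fun p : (List ℕ × (ℕ × (List (List ℕ) × List (List ℕ)))) × List ℕ =>
        p.1.1) := Primrec.fst.comp Primrec.fst
    have pi : Primrec (fun p : (List ℕ × (ℕ × (List (List ℕ) × List (List ℕ)))) × List ℕ =>
        p.1.2.1) := Primrec.fst.comp (Primrec.snd.comp Primrec.fst)
    have pX : Primrec (fun p : (List ℕ × (ℕ × (List (List ℕ) × List (List ℕ)))) × List ℕ =>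
        p.1.2.2.1) := Primrec.fst.comp (Primrec.snd.comp (Primrec.snd.comp Primrec.fst))
    have pY : Primrec (fun p : (List ℕ × (ℕ × (List (List ℕ) × List (List ℕ)))) × List ℕ =>
        p.1.2.2.2) := Primrec.snd.comp (Primrec.snd.comp (Primrec.snd.comp Primrec.fst))
    have hA : Primrec (fun p : (List ℕ × (ℕ × (List (List ℕ) × List (List ℕ)))) × List ℕ =>
        p.1.2.2.1 ++ [p.2]) := Primrec.list_concat.comp pX Primrec.snd
    have hK : Primrec (fun p : (List ℕ × (ℕ × (List (List ℕ) × List (List ℕ)))) × List ℕ =>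
        bestK p.1.1 ((p.1.2.2.1 ++ [p.2]).flatten) (p.1.2.1 + 1)) :=
      primrec_bestK.comp (pv.pair (Primrec.list_flatten.comp hA)) (Primrec.succ.comp pi)
    have hYf : Primrec (fun p : (List ℕ × (ℕ × (List (List ℕ) × List (List ℕ)))) × List ℕ =>
        p.1.2.2.2.flatten) := Primrec.list_flatten.comp pY
    have hite : Primrec (fun p : (List ℕ × (ℕ × (List (List ℕ) × List (List ℕ)))) × List ℕ =>
        if p.1.2.2.2.flatten =
            (bestK p.1.1 ((p.1.2.2.1 ++ [p.2]).flatten) (p.1.2.1 + 1)).take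
              p.1.2.2.2.flatten.length
          then (bestK p.1.1 ((p.1.2.2.1 ++ [p.2]).flatten) (p.1.2.1 + 1)).drop
              p.1.2.2.2.flatten.length
          else []) := by
      apply Primrec.ite
      · exact PrimrecRel.comp Primrec.eq hYf
          (primrec_list_take.comp hK (Primrec.list_length.comp hYf))
      · exact primrec_list_drop.comp hK (Primrec.list_length.comp hYf)
      · exact Primrec.const []
    exact hA.pair (Primrec.list_concat.comp pY hite)
  have harg : Computable (fun p : (List ℕ × ℕ) × (ℕ × (List (List ℕ) × List (List ℕ))) =>
      ((p.1.1, p.2), σ p.2.2.2)) :=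
    Computable.pair (Computable.pair (Computable.fst.comp Computable.fst) Computable.snd)
      (hσ.comp (Computable.snd.comp (Computable.snd.comp Computable.snd)))
  have hstep : Computable₂ (fun (a : List ℕ × ℕ)
      (x : ℕ × (List (List ℕ) × List (List ℕ))) =>
      (x.2.1 ++ [σ x.2.2],
       x.2.2 ++ [if x.2.2.flatten =
            (bestK a.1 ((x.2.1 ++ [σ x.2.2]).flatten) (x.1 + 1)).take x.2.2.flatten.length
          then (bestK a.1 ((x.2.1 ++ [σ x.2.2]).flatten) (x.1 + 1)).drop x.2.2.flatten.length
          else []])) :=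
    Computable.to₂ (hF.to_comp.comp harg)
  have hrec := Computable.nat_rec (f := fun p : List ℕ × ℕ => p.2)
    (g := fun _ : List ℕ × ℕ => (([], []) : List (List ℕ) × List (List ℕ)))
    Computable.snd (Computable.const ([], [])) hstep
  exact hrec.of_eq (fun p => rfl)

theorem hBack_computable {σ : List (List ℕ) → List ℕ} (hσ : Computable σ) :
    Computable (hBack σ) := by
  have hgo := goSim_computable hσ
  have hpair : Computable (fun v : List ℕ => (v, v.length)) :=
    Computable.pair Computable.id Primrec.list_length.to_comp
  have h0 := Primrec.list_flatten.to_comp.comp (Computable.fst.comp (hgo.comp hpair))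
  exact h0.of_eq (fun v => rfl)

end CompMain

/-- `f` is computably discontinuous iff Player I has a computable winning strategy in the
Wadge game of `f`. -/
theorem computably_discontinuous_iff_computable_wadge_winning_I (f : Problem) :
    ComputablyDiscontinuous f ↔
      ∃ σ : List (List ℕ) → List ℕ, Computable σ ∧ WadgeWinningI f σ := by
  constructor
  · rintro ⟨D, ⟨h, hc, hm, ha⟩, hdisc⟩
    exact ⟨sigmaW h, sigmaW_computable hc, forward_winning hm ha hdisc⟩
  · rintro ⟨σ, hσ, hwin⟩
    obtain ⟨h1, h2, h3⟩ := backward_main hwin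
    exact ⟨DBack σ, ⟨hBack σ, hBack_computable hσ, h1, h2⟩, h3⟩
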